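/- For any four points in R^d, the inequality Ṽ_2² · Ṽ_3² ≥ 36 V_4² holds, where Ṽ_2² is the sum of the six squared edge lengths, Ṽ_3² is the sum of the squares of the areas of the four faces, and V_4² is the square of the volume of the tetrahedron they span. -/

import Mathlib

open Matrix

noncomputable section

set_option maxHeartbeats 1000000

private lemma quad_aux {d : ℕ} (v w : EuclideanSpace ℝ (Fin d)) (x y : ℝ) :
    0 ≤ ‖v‖^2 * x^2 - 2*x*y*(inner ℝ v w : ℝ) + ‖w‖^2 * y^2 := by
  have h : (0:ℝ) ≤ inner ℝ (x • v - y • w) (x • v - y • w) := real_inner_self_nonneg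
  simp only [inner_sub_left, inner_sub_right, real_inner_smul_left, real_inner_smul_right,
    real_inner_self_eq_norm_sq, real_inner_comm v w, norm_smul, mul_pow, sq_abs,
    Real.norm_eq_abs] at h
  nlinarith [h]

private lemma cs_aux {d : ℕ} (v w : EuclideanSpace ℝ (Fin d)) :
    (inner ℝ v w : ℝ)^2 ≤ ‖v‖^2 * ‖w‖^2 := by
  have h := real_inner_mul_inner_self_le v w
  rw [real_inner_self_eq_norm_sq, real_inner_self_eq_norm_sq] at h
  nlinarith [h]

private lemma key_scalar (A B C P Q R F4 : ℝ)
    (hA : 0 ≤ A) (hB : 0 ≤ B) (hC : 0 ≤ C)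
    (hE12 : 0 ≤ A+B-2*P) (hE13 : 0 ≤ A+C-2*Q) (hE23 : 0 ≤ B+C-2*R)
    (hF1 : 0 ≤ A*B-P^2) (hF2 : 0 ≤ A*C-Q^2) (hF3 : 0 ≤ B*C-R^2) (hF4 : 0 ≤ F4)
    (hF4def : F4 = (A+B-2*P)*(A+C-2*Q) - (A-P-Q+R)^2)
    (hq1 : 0 ≤ B*Q^2 - 2*P*Q*R + C*P^2)
    (hq2 : 0 ≤ A*R^2 - 2*P*Q*R + C*P^2)
    (hq3 : 0 ≤ A*R^2 - 2*P*Q*R + B*Q^2)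
    (hq4 : 0 ≤ (A+B-2*P)*(A-Q)^2 - 2*(A-P)*(A-Q)*(A-P-Q+R) + (A+C-2*Q)*(A-P)^2) :
    A*B*C - A*R^2 - C*P^2 + 2*P*Q*R - B*Q^2 ≤
      (A+B+C+(A+B-2*P)+(A+C-2*Q)+(B+C-2*R)) * ((1/4)*((A*B-P^2)+(A*C-Q^2)+(B*C-R^2)+F4)) := by
  have hd1 : A*B*C - A*R^2 - C*P^2 + 2*P*Q*R - B*Q^2 ≤ A*(B*C-R^2) := by nlinarith [hq1]
  have hd2 : A*B*C - A*R^2 - C*P^2 + 2*P*Q*R - B*Q^2 ≤ B*(A*C-Q^2) := by nlinarith [hq2]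
  have hd3 : A*B*C - A*R^2 - C*P^2 + 2*P*Q*R - B*Q^2 ≤ C*(A*B-P^2) := by nlinarith [hq3]
  have hd4 : A*B*C - A*R^2 - C*P^2 + 2*P*Q*R - B*Q^2 ≤ A*F4 := by rw [hF4def]; nlinarith [hq4]
  linarith [hd1, hd2, hd3, hd4,
    mul_nonneg hA hF1, mul_nonneg hA hF2, mul_nonneg hA hF3, mul_nonneg hA hF4,
    mul_nonneg hB hF1, mul_nonneg hB hF2, mul_nonneg hB hF3, mul_nonneg hB hF4,
    mul_nonneg hC hF1, mul_nonneg hC hF2, mul_nonneg hC hF3, mul_nonneg hC hF4,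
    mul_nonneg hE12 hF1, mul_nonneg hE12 hF2, mul_nonneg hE12 hF3, mul_nonneg hE12 hF4,
    mul_nonneg hE13 hF1, mul_nonneg hE13 hF2, mul_nonneg hE13 hF3, mul_nonneg hE13 hF4,
    mul_nonneg hE23 hF1, mul_nonneg hE23 hF2, mul_nonneg hE23 hF3, mul_nonneg hE23 hF4]

/-- The squared area of the triangle with vertices `p q s`. -/
def areaSq {d : ℕ} (p q s : EuclideanSpace ℝ (Fin d)) : ℝ :=
  (1 / 4) * (‖q - p‖ ^ 2 * ‖s - p‖ ^ 2 - (inner ℝ (q - p) (s - p) : ℝ) ^ 2)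

/-- For any four points in `ℝ^d`: `Ṽ₂² · Ṽ₃² ≥ 36 V₄²`, where `Ṽ₂²` is the sum of
the six squared edge lengths, `Ṽ₃²` the sum of the squared areas of the four faces,
and `V₄² = (1/36)·Gram det` the squared volume of the tetrahedron. -/
theorem tetrahedron_inequality {d : ℕ} (r : Fin 4 → EuclideanSpace ℝ (Fin d))
    (V₂sq V₃sq V₄sq : ℝ)
    (hV₂ : V₂sq = ∑ i : Fin 4, ∑ j : Fin 4, if i < j then ‖r i - r j‖ ^ 2 else 0)
    (hV₃ : V₃sq = areaSq (r 0) (r 1) (r 2) + areaSq (r 0) (r 1) (r 3) +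
      areaSq (r 0) (r 2) (r 3) + areaSq (r 1) (r 2) (r 3))
    (hV₄ : V₄sq = (1 / 36) * (Matrix.of fun i j : Fin 3 =>
      (inner ℝ (r i.succ - r 0) (r j.succ - r 0) : ℝ)).det) :
    36 * V₄sq ≤ V₂sq * V₃sq := by
  set a : EuclideanSpace ℝ (Fin d) := r 1 - r 0 with ha
  set b : EuclideanSpace ℝ (Fin d) := r 2 - r 0 with hb
  set c : EuclideanSpace ℝ (Fin d) := r 3 - r 0 with hc
  -- abbreviations for the scalar quantities
  have hnba : ‖b - a‖^2 = ‖a‖^2 + ‖b‖^2 - 2*(inner ℝ a b : ℝ) := by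
    rw [norm_sub_sq_real b a, real_inner_comm b a]; ring
  have hnca : ‖c - a‖^2 = ‖a‖^2 + ‖c‖^2 - 2*(inner ℝ a c : ℝ) := by
    rw [norm_sub_sq_real c a, real_inner_comm c a]; ring
  have hiba : (inner ℝ (b - a) (c - a) : ℝ) =
      ‖a‖^2 - (inner ℝ a b : ℝ) - (inner ℝ a c : ℝ) + (inner ℝ b c : ℝ) := by
    simp only [inner_sub_left, inner_sub_right]
    rw [real_inner_comm b a, real_inner_self_eq_norm_sq]
    ring
  -- V₂
  have hV₂' : V₂sq = ‖a‖^2 + ‖b‖^2 + ‖c‖^2 + (‖a‖^2 + ‖b‖^2 - 2*(inner ℝ a b : ℝ))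
      + (‖a‖^2 + ‖c‖^2 - 2*(inner ℝ a c : ℝ)) + (‖b‖^2 + ‖c‖^2 - 2*(inner ℝ b c : ℝ)) := by
    have h6 : V₂sq = ‖r 0 - r 1‖^2 + ‖r 0 - r 2‖^2 + ‖r 0 - r 3‖^2 + ‖r 1 - r 2‖^2
        + ‖r 1 - r 3‖^2 + ‖r 2 - r 3‖^2 := by
      rw [hV₂]
      simp only [Fin.sum_univ_four]
      rw [if_neg (by decide), if_pos (by decide), if_pos (by decide), if_pos (by decide),
        if_neg (by decide), if_neg (by decide), if_pos (by decide), if_pos (by decide),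
        if_neg (by decide), if_neg (by decide), if_neg (by decide), if_pos (by decide),
        if_neg (by decide), if_neg (by decide), if_neg (by decide), if_neg (by decide)]
      ring
    rw [h6, show r 0 - r 1 = -a from by rw [ha]; abel,
      show r 0 - r 2 = -b from by rw [hb]; abel,
      show r 0 - r 3 = -c from by rw [hc]; abel,
      show r 1 - r 2 = a - b from by rw [ha, hb]; abel,
      show r 1 - r 3 = a - c from by rw [ha, hc]; abel,
      show r 2 - r 3 = b - c from by rw [hb, hc]; abel,
      norm_neg, norm_neg, norm_neg, norm_sub_sq_real a b, norm_sub_sq_real a c, norm_sub_sq_real b c]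
    ring
  -- V₃
  have hV₃' : V₃sq = (1/4)*((‖a‖^2*‖b‖^2 - (inner ℝ a b : ℝ)^2)
      + (‖a‖^2*‖c‖^2 - (inner ℝ a c : ℝ)^2) + (‖b‖^2*‖c‖^2 - (inner ℝ b c : ℝ)^2)
      + (‖b - a‖^2*‖c - a‖^2 - (inner ℝ (b - a) (c - a) : ℝ)^2)) := by
    rw [hV₃]
    simp only [areaSq, ← ha, ← hb, ← hc,
      show r 2 - r 1 = b - a from by rw [ha, hb]; abel,
      show r 3 - r 1 = c - a from by rw [ha, hc]; abel]
    ring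
  -- V₄
  have hV₄' : 36 * V₄sq = ‖a‖^2*‖b‖^2*‖c‖^2 - ‖a‖^2*(inner ℝ b c : ℝ)^2
      - ‖c‖^2*(inner ℝ a b : ℝ)^2 + 2*(inner ℝ a b : ℝ)*(inner ℝ a c : ℝ)*(inner ℝ b c : ℝ)
      - ‖b‖^2*(inner ℝ a c : ℝ)^2 := by
    rw [hV₄, Matrix.det_fin_three]
    simp only [Matrix.of_apply, show ((0:Fin 3)).succ = (1:Fin 4) from rfl,
      show ((1:Fin 3)).succ = (2:Fin 4) from rfl, show ((2:Fin 3)).succ = (3:Fin 4) from rfl,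
      ← ha, ← hb, ← hc, real_inner_comm b a, real_inner_comm c a, real_inner_comm c b,
      real_inner_self_eq_norm_sq]
    ring
  -- nonnegativity facts
  have hq1 : (0:ℝ) ≤ ‖b‖^2*(inner ℝ a c : ℝ)^2
      - 2*(inner ℝ a b : ℝ)*(inner ℝ a c : ℝ)*(inner ℝ b c : ℝ) + ‖c‖^2*(inner ℝ a b : ℝ)^2 := by
    have h := quad_aux b c (inner ℝ a c : ℝ) (inner ℝ a b : ℝ); linarith
  have hq2 : (0:ℝ) ≤ ‖a‖^2*(inner ℝ b c : ℝ)^2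
      - 2*(inner ℝ a b : ℝ)*(inner ℝ a c : ℝ)*(inner ℝ b c : ℝ) + ‖c‖^2*(inner ℝ a b : ℝ)^2 := by
    have h := quad_aux a c (inner ℝ b c : ℝ) (inner ℝ a b : ℝ); linarith
  have hq3 : (0:ℝ) ≤ ‖a‖^2*(inner ℝ b c : ℝ)^2
      - 2*(inner ℝ a b : ℝ)*(inner ℝ a c : ℝ)*(inner ℝ b c : ℝ) + ‖b‖^2*(inner ℝ a c : ℝ)^2 := by
    have h := quad_aux a b (inner ℝ b c : ℝ) (inner ℝ a c : ℝ); linarith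
  have hq4 : (0:ℝ) ≤ (‖a‖^2 + ‖b‖^2 - 2*(inner ℝ a b : ℝ))*(‖a‖^2 - (inner ℝ a c : ℝ))^2
      - 2*(‖a‖^2 - (inner ℝ a b : ℝ))*(‖a‖^2 - (inner ℝ a c : ℝ))
        *(‖a‖^2 - (inner ℝ a b : ℝ) - (inner ℝ a c : ℝ) + (inner ℝ b c : ℝ))
      + (‖a‖^2 + ‖c‖^2 - 2*(inner ℝ a c : ℝ))*(‖a‖^2 - (inner ℝ a b : ℝ))^2 := by
    have h := quad_aux (b - a) (c - a) (‖a‖^2 - (inner ℝ a c : ℝ)) (‖a‖^2 - (inner ℝ a b : ℝ))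
    rw [hnba, hnca, hiba] at h
    linarith
  have hF1 := cs_aux a b
  have hF2 := cs_aux a c
  have hF3 := cs_aux b c
  have hF4 := cs_aux (b - a) (c - a)
  have hE12 : (0:ℝ) ≤ ‖a‖^2 + ‖b‖^2 - 2*(inner ℝ a b : ℝ) := by rw [← hnba]; positivity
  have hE13 : (0:ℝ) ≤ ‖a‖^2 + ‖c‖^2 - 2*(inner ℝ a c : ℝ) := by rw [← hnca]; positivity
  have hE23 : (0:ℝ) ≤ ‖b‖^2 + ‖c‖^2 - 2*(inner ℝ b c : ℝ) := by
    have : ‖b - c‖^2 = ‖b‖^2 + ‖c‖^2 - 2*(inner ℝ b c : ℝ) := by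
      rw [norm_sub_sq_real b c]; ring
    rw [← this]; positivity
  rw [hV₂', hV₃', hV₄']
  exact key_scalar (‖a‖^2) (‖b‖^2) (‖c‖^2) (inner ℝ a b : ℝ) (inner ℝ a c : ℝ) (inner ℝ b c : ℝ)
    (‖b - a‖^2*‖c - a‖^2 - (inner ℝ (b - a) (c - a) : ℝ)^2)
    (by positivity) (by positivity) (by positivity) hE12 hE13 hE23
    (by linarith) (by linarith) (by linarith) (by linarith [hF4])
    (by rw [hnba, hnca, hiba]) hq1 hq2 hq3 hq4

end
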